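/- Theorem (Householder): For any k ≥ 1, the Householder iteration of order k, x_{n+1} = x_n + k · (1/f)^{(k-1)}(x_n) / (1/f)^{(k)}(x_n), applied to f(x) = x² + 1 with real initial guess x₀ = cot θ₀, θ₀ ∈ (0, π), satisfies x_n = cot((k+1)ⁿ θ₀) for all n for which the iterates are defined. -/

import Mathlib

open Real

lemma householder_hd_im {f : ℝ → ℂ} {f' : ℂ} {x : ℝ} (hf : HasDerivAt f f' x) :
    HasDerivAt (fun y => (f y).im) f'.im x := by
  have := (Complex.imCLM.hasFDerivAt.comp x hf.hasFDerivAt).hasDerivAt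
  simpa [Function.comp_def] using this

lemma householder_key_deriv (n : ℕ) (x : ℝ) :
    HasDerivAt (fun y : ℝ => ((y : ℂ) - Complex.I)⁻¹ ^ (n + 1))
      (-(n + 1) * ((x : ℂ) - Complex.I)⁻¹ ^ (n + 2)) x := by
  have hx : (x : ℂ) - Complex.I ≠ 0 := by
    intro h; have := congrArg Complex.im h; simp at this
  have h1 : HasDerivAt (fun z : ℂ => (z - Complex.I) ^ (-(n + 1) : ℤ))
      ((-(n + 1) : ℤ) * ((x : ℂ) - Complex.I) ^ ((-(n + 1) : ℤ) - 1)) x := by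
    have := (hasDerivAt_zpow (-(n + 1) : ℤ) ((x : ℂ) - Complex.I) (Or.inl hx)).comp
      (x : ℂ) ((hasDerivAt_id (x : ℂ)).sub_const Complex.I)
    simpa [Function.comp_def] using this
  have h2 := h1.comp_ofReal
  have e2 : ((-(n + 1) : ℤ) : ℂ) * ((x : ℂ) - Complex.I) ^ ((-(n + 1) : ℤ) - 1)
      = -(n + 1) * ((x : ℂ) - Complex.I)⁻¹ ^ (n + 2) := by
    rw [show ((-(n + 1) : ℤ) - 1) = (-(n + 2) : ℤ) by ring, zpow_neg, inv_pow]
    push_cast; norm_cast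
  rw [← e2]
  exact h2.congr_of_eventuallyEq (by
    filter_upwards with y
    rw [zpow_neg, inv_pow]; norm_cast)

lemma householder_closed_form (n : ℕ) (x : ℝ) :
    iteratedDeriv n (fun t : ℝ => (t ^ 2 + 1)⁻¹) x
      = (-1 : ℝ) ^ n * n.factorial * (((x : ℂ) - Complex.I)⁻¹ ^ (n + 1)).im := by
  induction n generalizing x with
  | zero =>
    have h : (((x : ℂ) - Complex.I)⁻¹).im = (x ^ 2 + 1)⁻¹ := by
      rw [Complex.inv_im]
      simp [Complex.normSq_apply]
      ring_nf
    simp [h]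
  | succ n ih =>
    rw [iteratedDeriv_succ]
    have hfun : iteratedDeriv n (fun t : ℝ => (t ^ 2 + 1)⁻¹)
        = fun y : ℝ => (-1 : ℝ) ^ n * n.factorial * (((y : ℂ) - Complex.I)⁻¹ ^ (n + 1)).im :=
      funext fun y => ih y
    rw [hfun]
    have hd := ((householder_hd_im (householder_key_deriv n x)).const_mul
      ((-1 : ℝ) ^ n * n.factorial)).deriv
    rw [hd]
    have him : (-(n + 1 : ℂ) * ((x : ℂ) - Complex.I)⁻¹ ^ (n + 2)).im
        = -(n + 1 : ℝ) * ((((x : ℂ) - Complex.I)⁻¹ ^ (n + 2)).im) := by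
      rw [Complex.mul_im]; push_cast; simp
    rw [him, Nat.factorial_succ]
    push_cast
    ring_nf

lemma householder_cot_sub_I (θ : ℝ) (hs : Real.sin θ ≠ 0) :
    ((Real.cot θ : ℂ) - Complex.I)⁻¹ = (Real.sin θ : ℂ) * Complex.exp (θ * Complex.I) := by
  apply inv_eq_of_mul_eq_one_right
  have hs' : Complex.sin (θ : ℂ) ≠ 0 := by
    rw [← Complex.ofReal_sin]; exact_mod_cast hs
  have key : Complex.sin (θ : ℂ) ^ 2 + Complex.cos (θ : ℂ) ^ 2 = 1 :=
    Complex.sin_sq_add_cos_sq θ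
  rw [Real.cot_eq_cos_div_sin, Complex.exp_mul_I, ← Complex.ofReal_cos, ← Complex.ofReal_sin]
  push_cast
  field_simp
  linear_combination key - Complex.sin (θ:ℂ)^2 * (Complex.I_sq)

lemma householder_deriv_at_cot (n : ℕ) (θ : ℝ) (hs : Real.sin θ ≠ 0) :
    iteratedDeriv n (fun t : ℝ => (t ^ 2 + 1)⁻¹) (Real.cot θ)
      = (-1 : ℝ) ^ n * n.factorial * Real.sin θ ^ (n + 1) * Real.sin ((n + 1) * θ) := by
  rw [householder_closed_form, householder_cot_sub_I _ hs, mul_pow, ← Complex.exp_nat_mul]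
  have : ((n + 1 : ℕ) : ℂ) * ((θ : ℂ) * Complex.I) = (((n + 1 : ℝ) * θ : ℝ) : ℂ) * Complex.I := by
    push_cast; ring
  rw [this]
  have him : ((Real.sin θ : ℂ) ^ (n + 1) * Complex.exp ((((n + 1 : ℝ) * θ : ℝ) : ℂ) * Complex.I)).im
      = Real.sin θ ^ (n + 1) * Real.sin ((n + 1 : ℝ) * θ) := by
    rw [← Complex.ofReal_pow, Complex.im_ofReal_mul, Complex.exp_ofReal_mul_I_im]
  rw [him]
  ring

lemma householder_cot_step (m : ℕ) (α : ℝ) (hsα : Real.sin α ≠ 0)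
    (hsβ : Real.sin (((m : ℝ) + 2) * α) ≠ 0) :
    Real.cot α + ((m : ℝ) + 1) *
        ((-1 : ℝ) ^ m * m.factorial * Real.sin α ^ (m + 1) * Real.sin (((m : ℝ) + 1) * α)) /
        ((-1 : ℝ) ^ (m + 1) * (m + 1).factorial * Real.sin α ^ (m + 2) *
          Real.sin (((m : ℝ) + 2) * α))
      = Real.cot (((m : ℝ) + 2) * α) := by
  have hfac : (((m + 1).factorial : ℝ)) = ((m : ℝ) + 1) * m.factorial := by
    exact_mod_cast Nat.factorial_succ m
  have hm : (m.factorial : ℝ) ≠ 0 := Nat.cast_ne_zero.mpr (Nat.factorial_ne_zero m)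
  have hm1 : ((m : ℝ) + 1) ≠ 0 := by positivity
  have hneg : ((-1 : ℝ) ^ m) ≠ 0 := by
    simp [pow_ne_zero]
  have hfrac : ((m : ℝ) + 1) *
        ((-1 : ℝ) ^ m * m.factorial * Real.sin α ^ (m + 1) * Real.sin (((m : ℝ) + 1) * α)) /
        ((-1 : ℝ) ^ (m + 1) * (m + 1).factorial * Real.sin α ^ (m + 2) *
          Real.sin (((m : ℝ) + 2) * α))
      = -(Real.sin (((m : ℝ) + 1) * α) / (Real.sin α * Real.sin (((m : ℝ) + 2) * α))) := by
    rw [hfac, pow_succ (-1 : ℝ) m, pow_succ (Real.sin α) (m + 1), pow_succ (Real.sin α) m]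
    field_simp
  rw [hfrac, Real.cot_eq_cos_div_sin, Real.cot_eq_cos_div_sin]
  have hadd : (((m : ℝ) + 2) * α) = ((m : ℝ) + 1) * α + α := by ring
  rw [hadd, Real.sin_add] at hsβ
  rw [hadd, Real.sin_add, Real.cos_add]
  set β := ((m : ℝ) + 1) * α with hβ
  clear_value β
  clear hfrac hadd hβ
  have hD : Real.cos α * Real.sin β + Real.sin α * Real.cos β ≠ 0 := by
    intro h; apply hsβ; linarith
  field_simp
  linear_combination Real.sin β * Real.sin_sq_add_cos_sq α

/-- Theorem (Householder): for any `k ≥ 1`, the Householder iteration of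
order `k`, `x_{n+1} = x_n + k (1/f)^{(k-1)}(x_n) / (1/f)^{(k)}(x_n)`, applied
to `f(x) = x² + 1` with real initial guess `x₀ = cot θ₀`, `θ₀ ∈ (0, π)`,
satisfies `x_n = cot((k+1)ⁿ θ₀)` for all `n` for which the iterates are
defined. -/
theorem householder_orbit_cot (k : ℕ) (hk : 1 ≤ k) (θ₀ : ℝ)
    (hθ : θ₀ ∈ Set.Ioo 0 Real.pi) (x : ℕ → ℝ)
    (h0 : x 0 = Real.cot θ₀)
    (hne : ∀ n, iteratedDeriv k (fun t : ℝ => (t ^ 2 + 1)⁻¹) (x n) ≠ 0)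
    (hrec : ∀ n, x (n + 1) =
      x n + (k : ℝ) * iteratedDeriv (k - 1) (fun t : ℝ => (t ^ 2 + 1)⁻¹) (x n) /
        iteratedDeriv k (fun t : ℝ => (t ^ 2 + 1)⁻¹) (x n))
    (hdef : ∀ n, Real.sin ((k + 1 : ℝ) ^ n * θ₀) ≠ 0) :
    ∀ n, x n = Real.cot ((k + 1 : ℝ) ^ n * θ₀) := by
  obtain ⟨m, rfl⟩ : ∃ m, k = m + 1 := ⟨k - 1, (Nat.succ_pred_eq_of_pos hk).symm⟩
  intro n
  induction n with
  | zero => simpa using h0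
  | succ n ih =>
    set α := (((m + 1 : ℕ) : ℝ) + 1) ^ n * θ₀ with hα
    have hsα : Real.sin α ≠ 0 := hdef n
    have h1 : (((m + 1 : ℕ) : ℝ) + 1) ^ (n + 1) * θ₀ = ((m : ℝ) + 2) * α := by
      rw [hα, pow_succ]; push_cast; ring
    have hsβ : Real.sin (((m : ℝ) + 2) * α) ≠ 0 := by rw [← h1]; exact hdef (n + 1)
    rw [hrec n, ih, h1]
    simp only [Nat.add_sub_cancel]
    rw [householder_deriv_at_cot m α hsα, householder_deriv_at_cot (m + 1) α hsα]
    have key := householder_cot_step m α hsα hsβ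
    push_cast at key ⊢
    rw [show ((m : ℝ) + 1 + 1) * α = ((m : ℝ) + 2) * α from by ring]
    linear_combination key
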